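/- arXiv:1601.06905 — 2 statements merged into one kernel-verified Lean document; each statement's English description precedes it below -/
import Mathlib

section
/- Let L be a connection on Ω and g a metric on Ω, with torsion T, lowered curvature R, and non-metricity Q. Then the third Bianchi–Padova relation holds: for all indices i,j,k,l and all points of Ω, (1/2)(∇_i Q_{jkl} − ∇_j Q_{ikl}) = (1/2)(R_{ijkl} + R_{ijlk}) − T_{ij}^p Q_{pkl}. -/
noncomputable section

/-- Points of ℝ³. -/
abbrev E3 := Fin 3 → ℝ

/-- Partial derivative of `f` along the `j`-th coordinate at `x`. -/
def pd (f : E3 → ℝ) (j : Fin 3) (x : E3) : ℝ :=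
  fderiv ℝ f x (Pi.single j 1)

/-- A connection coefficient field: `L x i j k = L^i_{jk}(x)`. -/
abbrev Conn := E3 → Fin 3 → Fin 3 → Fin 3 → ℝ

/-- Smoothness of a connection on `Ω`. -/
def ConnSmooth (L : Conn) (Ω : Set E3) : Prop :=
  ∀ i j k, ContDiffOn ℝ (⊤ : ℕ∞) (fun x => L x i j k) Ω

/-- Torsion of a connection: `torsion L x i j k = T_{jk}^i = (1/2)(L^i_{jk} - L^i_{kj})`. -/
def torsion (L : Conn) (x : E3) (i j k : Fin 3) : ℝ :=
  (L x i j k - L x i k j) / 2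

/-- Curvature of a connection: `curv L x p j i q = R_{jiq}^p`. -/
def curv (L : Conn) (x : E3) (p j i q : Fin 3) : ℝ :=
  pd (fun y => L y p i q) j x - pd (fun y => L y p j q) i x
    + ∑ h, (L x h i q * L x p j h - L x h j q * L x p i h)

/-- A metric field. -/
abbrev Metric := E3 → Matrix (Fin 3) (Fin 3) ℝ

/-- `g` is a metric on `Ω`: smooth entries, symmetric and positive definite on `Ω`. -/
def MetricOn (g : Metric) (Ω : Set E3) : Prop :=
  (∀ i j, ContDiffOn ℝ (⊤ : ℕ∞) (fun x => g x i j) Ω) ∧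
  (∀ x ∈ Ω, (g x).IsSymm) ∧ (∀ x ∈ Ω, (g x).PosDef)

/-- Non-metricity of `(L, g)`: `nm L g x k i j = Q_{kij}`. -/
def nm (L : Conn) (g : Metric) (x : E3) (k i j : Fin 3) : ℝ :=
  - pd (fun y => g y i j) k x + ∑ p, (L x p k j * g x i p + L x p k i * g x j p)

/-- Lowered curvature: `lcurv L g x i j k l = R_{ijkl} = g_{lp} R_{ijk}^p`. -/
def lcurv (L : Conn) (g : Metric) (x : E3) (i j k l : Fin 3) : ℝ :=
  ∑ p, g x l p * curv L x p i j k

/-- Covariant derivative of the non-metricity: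
`covQ L g m j k l x = ∇_m Q_{jkl}`. -/
def covQ (L : Conn) (g : Metric) (m j k l : Fin 3) (x : E3) : ℝ :=
  pd (fun y => nm L g y j k l) m x
    - ∑ p, (L x p m j * nm L g x p k l + L x p m k * nm L g x j p l
            + L x p m l * nm L g x j k p)

namespace BP3

variable {x : E3} {j : Fin 3}

lemma pd_congr {f h : E3 → ℝ} (hfh : f =ᶠ[nhds x] h) : pd f j x = pd h j x := by
  unfold pd; rw [hfh.fderiv_eq]

lemma pd_add {f h : E3 → ℝ} (hf : DifferentiableAt ℝ f x) (hh : DifferentiableAt ℝ h x) :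
    pd (fun y => f y + h y) j x = pd f j x + pd h j x := by
  unfold pd; rw [fderiv_fun_add hf hh]; simp

lemma pd_neg {f : E3 → ℝ} : pd (fun y => -f y) j x = - pd f j x := by
  unfold pd; rw [fderiv_fun_neg]; simp

lemma pd_mul {f h : E3 → ℝ} (hf : DifferentiableAt ℝ f x) (hh : DifferentiableAt ℝ h x) :
    pd (fun y => f y * h y) j x = f x * pd h j x + h x * pd f j x := by
  unfold pd; rw [fderiv_fun_mul hf hh]; simp

lemma pd_sum {F : Fin 3 → E3 → ℝ} (h : ∀ p, DifferentiableAt ℝ (F p) x) :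
    pd (fun y => ∑ p, F p y) j x = ∑ p, pd (F p) j x := by
  unfold pd; rw [fderiv_fun_sum (fun p _ => h p)]; simp

lemma pd_div2 {f : E3 → ℝ} (hf : DifferentiableAt ℝ f x) :
    pd (fun y => f y / 2) j x = pd f j x / 2 := by
  have : (fun y => f y / 2) = fun y => (2 : ℝ)⁻¹ * f y := by funext y; ring
  unfold pd; rw [this, fderiv_const_mul hf]; simp; ring

variable {Ω : Set E3}

lemma diffat {f : E3 → ℝ} (hΩ : IsOpen Ω) (hf : ContDiffOn ℝ (⊤ : ℕ∞) f Ω) (hx : x ∈ Ω) :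
    DifferentiableAt ℝ f x :=
  (hf.contDiffAt (hΩ.mem_nhds hx)).differentiableAt (by decide)

lemma contDiffOn_pd {f : E3 → ℝ} (hΩ : IsOpen Ω) (hf : ContDiffOn ℝ (⊤ : ℕ∞) f Ω) (j : Fin 3) :
    ContDiffOn ℝ (⊤ : ℕ∞) (fun y => pd f j y) Ω := by
  have h1 : ContDiffOn ℝ (⊤ : ℕ∞) (fderiv ℝ f) Ω := hf.fderiv_of_isOpen hΩ (by decide)
  exact h1.clm_apply contDiffOn_const

lemma pd_pd_comm {f : E3 → ℝ} (hΩ : IsOpen Ω) (hf : ContDiffOn ℝ (⊤ : ℕ∞) f Ω)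
    (hx : x ∈ Ω) (i j : Fin 3) :
    pd (fun y => pd f j y) i x = pd (fun y => pd f i y) j x := by
  have hat : ContDiffAt ℝ (⊤ : ℕ∞) f x := hf.contDiffAt (hΩ.mem_nhds hx)
  have hsym : IsSymmSndFDerivAt ℝ f x := hat.isSymmSndFDerivAt (by rw [minSmoothness_of_isRCLikeNormedField]; decide)
  have hd1 : DifferentiableAt ℝ (fderiv ℝ f) x :=
    (hat.fderiv_right (m := ((⊤:ℕ∞) : WithTop ℕ∞)) (by decide)).differentiableAt (by decide)
  have key : ∀ a b : Fin 3, pd (fun y => pd f b y) a x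
      = fderiv ℝ (fderiv ℝ f) x (Pi.single a 1) (Pi.single b 1) := by
    intro a b
    unfold pd
    have h1 : fderiv ℝ (fun y => (fderiv ℝ f y) (Pi.single b (1:ℝ))) x
        = (fderiv ℝ f x).comp (fderiv ℝ (fun _ : E3 => Pi.single b (1:ℝ)) x)
          + (fderiv ℝ (fderiv ℝ f) x).flip (Pi.single b 1) :=
      fderiv_clm_apply hd1 (differentiableAt_const _)
    rw [h1]; simp
  rw [key i j, key j i, hsym (Pi.single i 1) (Pi.single j 1)]

lemma pd_nm (hΩ : IsOpen Ω) {L : Conn} (hL : ConnSmooth L Ω) {g : Metric}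
    (hgs : ∀ a b, ContDiffOn ℝ (⊤ : ℕ∞) (fun y => g y a b) Ω) (hx : x ∈ Ω)
    (m j k l : Fin 3) :
    pd (fun y => nm L g y j k l) m x =
      - pd (fun y => pd (fun z => g z k l) j y) m x
      + ∑ p, (pd (fun y => L y p j l) m x * g x k p + L x p j l * pd (fun y => g y k p) m x
            + (pd (fun y => L y p j k) m x * g x l p + L x p j k * pd (fun y => g y l p) m x)) := by
  have dL : ∀ p a b, DifferentiableAt ℝ (fun y => L y p a b) x :=
    fun p a b => diffat hΩ (hL p a b) hx
  have dg : ∀ a b, DifferentiableAt ℝ (fun y => g y a b) x :=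
    fun a b => diffat hΩ (hgs a b) hx
  have dpg : DifferentiableAt ℝ (fun y => pd (fun z => g z k l) j y) x :=
    diffat hΩ (contDiffOn_pd hΩ (hgs k l) j) hx
  have dsum : ∀ p, DifferentiableAt ℝ (fun z => L z p j l * g z k p + L z p j k * g z l p) x :=
    fun p => ((dL p j l).mul (dg k p)).add ((dL p j k).mul (dg l p))
  have h1 : pd (fun y => nm L g y j k l) m x
      = pd (fun z => -pd (fun w => g w k l) j z) m x
        + pd (fun z => ∑ p, (L z p j l * g z k p + L z p j k * g z l p)) m x :=
    pd_add dpg.neg (DifferentiableAt.fun_sum fun p _ => dsum p)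
  have h2 : pd (fun z => -pd (fun w => g w k l) j z) m x
      = - pd (fun z => pd (fun w => g w k l) j z) m x := pd_neg
  have h3 : pd (fun z => ∑ p, (L z p j l * g z k p + L z p j k * g z l p)) m x
      = ∑ p, pd (fun z => L z p j l * g z k p + L z p j k * g z l p) m x :=
    pd_sum dsum
  have h4 : ∀ p : Fin 3, pd (fun z => L z p j l * g z k p + L z p j k * g z l p) m x
      = pd (fun y => L y p j l) m x * g x k p + L x p j l * pd (fun y => g y k p) m x
        + (pd (fun y => L y p j k) m x * g x l p + L x p j k * pd (fun y => g y l p) m x) := by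
    intro p
    rw [pd_add ((dL p j l).fun_mul (dg k p)) ((dL p j k).fun_mul (dg l p)),
        pd_mul (dL p j l) (dg k p), pd_mul (dL p j k) (dg l p)]
    ring
  rw [h1, h2, h3]
  simp only [h4]

lemma core (hΩ : IsOpen Ω) {L : Conn} (hL : ConnSmooth L Ω)
    (f : E3 → Matrix (Fin 3) (Fin 3) ℝ)
    (hf : ∀ a b, ContDiffOn ℝ (⊤ : ℕ∞) (fun y => f y a b) Ω)
    (g : Metric) (hgab : ∀ y a b, g y a b = (f y a b + f y b a) / 2)
    (hx : x ∈ Ω) (i j k l : Fin 3) :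
    (1 / 2) * (covQ L g i j k l x - covQ L g j i k l x)
      = (1 / 2) * (lcurv L g x i j k l + lcurv L g x i j l k)
        - ∑ p, torsion L x p i j * nm L g x p k l := by
  have hge : ∀ a b : Fin 3, (fun y => g y a b) = (fun y => (f y a b + f y b a) / 2) :=
    fun a b => funext fun y => hgab y a b
  have hgs : ∀ a b, ContDiffOn ℝ (⊤ : ℕ∞) (fun y => g y a b) Ω := by
    intro a b
    rw [hge a b]
    exact ((hf a b).add (hf b a)).div_const 2
  have df : ∀ a b, DifferentiableAt ℝ (fun y => f y a b) x :=
    fun a b => diffat hΩ (hf a b) hx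
  have hpdg : ∀ (m a b : Fin 3), pd (fun y => g y a b) m x
      = (pd (fun y => f y a b) m x + pd (fun y => f y b a) m x) / 2 := by
    intro m a b
    rw [hge a b, pd_div2 ((df a b).fun_add (df b a)), pd_add (df a b) (df b a)]
  simp only [covQ]
  rw [pd_nm hΩ hL hgs hx i j k l, pd_nm hΩ hL hgs hx j i k l]
  rw [pd_pd_comm hΩ (hgs k l) hx i j]
  simp only [nm, lcurv, curv, torsion]
  simp only [hpdg]
  simp only [hgab]
  simp only [Fin.sum_univ_three]
  ring

end BP3

/-- The third Bianchi–Padova relation: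
`∇_{[i} Q_{j]kl} = R_{ij(kl)} - T_{ij}^p Q_{pkl}`. -/
theorem third_bianchi_padova (Ω : Set E3) (hΩ : IsOpen Ω) (hne : Ω.Nonempty)
    (L : Conn) (hL : ConnSmooth L Ω) (g : Metric) (hg : MetricOn g Ω) :
    ∀ x ∈ Ω, ∀ i j k l : Fin 3,
      (1 / 2) * (covQ L g i j k l x - covQ L g j i k l x)
        = (1 / 2) * (lcurv L g x i j k l + lcurv L g x i j l k)
          - ∑ p, torsion L x p i j * nm L g x p k l := by
  intro x hx i j k l
  set S : Metric := fun y => Matrix.of fun a b => (g y a b + g y b a) / 2 with hS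
  have hSab : ∀ (y : E3) (a b : Fin 3), S y a b = (g y a b + g y b a) / 2 := fun y a b => rfl
  have hΩx : Ω ∈ nhds x := hΩ.mem_nhds hx
  have hsym : ∀ y ∈ Ω, ∀ a b : Fin 3, g y a b = S y a b := by
    intro y hy a b
    have h : g y b a = g y a b := (hg.2.1 y hy).apply a b
    rw [hSab, h]; ring
  have hpd : ∀ y ∈ Ω, ∀ (m a b : Fin 3),
      pd (fun z => g z a b) m y = pd (fun z => S z a b) m y := by
    intro y hy m a b
    apply BP3.pd_congr
    filter_upwards [hΩ.mem_nhds hy] with z hz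
    exact hsym z hz a b
  have hnm : ∀ y ∈ Ω, ∀ a b c : Fin 3, nm L g y a b c = nm L S y a b c := by
    intro y hy a b c
    simp only [nm, hpd y hy, hsym y hy]
  have hcov : ∀ a b : Fin 3, covQ L g a b k l x = covQ L S a b k l x := by
    intro a b
    simp only [covQ]
    congr 1
    · apply BP3.pd_congr
      filter_upwards [hΩx] with z hz
      exact hnm z hz b k l
    · exact Finset.sum_congr rfl fun p _ => by
        rw [hnm x hx p k l, hnm x hx b p l, hnm x hx b k p]
  have hlc : ∀ a b : Fin 3, lcurv L g x i j a b = lcurv L S x i j a b := by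
    intro a b
    exact Finset.sum_congr rfl fun p _ => by rw [hsym x hx b p]
  rw [hcov i j, hcov j i, hlc k l, hlc l k]
  have hnmx : ∀ p : Fin 3, nm L g x p k l = nm L S x p k l := fun p => hnm x hx p k l
  simp only [hnmx]
  exact BP3.core hΩ hL g hg.1 S hSab hx i j k l
end
end

section
/- Let L be a connection on Ω and g a metric on Ω, with lowered curvature R and non-metricity Q. Define X_{jikl} := ∂_i Q_{jkl} + L^p_{jk} Q_{ipl} + L^p_{jl} Q_{ipk}. Then for all indices i,j,k,l and all points of Ω, (1/2)(X_{jikl} − X_{ijkl}) = (1/2)(R_{ijkl} + R_{ijlk}). Consequently, the skew expression (1/2)(X_{jikl} − X_{ijkl}) vanishes identically on Ω if and only if R_{ij(kl)} := (1/2)(R_{ijkl} + R_{ijlk}) vanishes identically on Ω. -/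
noncomputable section

/-- `X L g j i k l x = X_{jikl} = ∂_i Q_{jkl} + L^p_{jk} Q_{ipl} + L^p_{jl} Q_{ipk}`. -/
def X (L : Conn) (g : Metric) (j i k l : Fin 3) (x : E3) : ℝ :=
  pd (fun y => nm L g y j k l) i x
    + ∑ p, (L x p j k * nm L g x i p l + L x p j l * nm L g x i p k)


section BianchiHelpers

variable {f f₁ f₂ : E3 → ℝ} {x : E3} {j : Fin 3}

lemma pd_add' (h1 : DifferentiableAt ℝ f₁ x) (h2 : DifferentiableAt ℝ f₂ x) :
    pd (fun y => f₁ y + f₂ y) j x = pd f₁ j x + pd f₂ j x := by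
  simp [pd, fderiv_fun_add h1 h2]

lemma pd_neg' : pd (fun y => -f y) j x = - pd f j x := by
  simp [pd, fderiv_neg]

lemma pd_mul' (h1 : DifferentiableAt ℝ f₁ x) (h2 : DifferentiableAt ℝ f₂ x) :
    pd (fun y => f₁ y * f₂ y) j x = pd f₁ j x * f₂ x + f₁ x * pd f₂ j x := by
  simp [pd, fderiv_fun_mul h1 h2]; ring

lemma pd_sum' {F : Fin 3 → E3 → ℝ} (h : ∀ p, DifferentiableAt ℝ (F p) x) :
    pd (fun y => ∑ p, F p y) j x = ∑ p, pd (F p) j x := by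
  simp [pd, fderiv_fun_sum (fun p _ => h p)]

lemma pd_congr' (h : f₁ =ᶠ[nhds x] f₂) : pd f₁ j x = pd f₂ j x := by
  simp [pd, h.fderiv_eq]

lemma contDiffAt_fderiv_diff' (hf : ContDiffAt ℝ ((⊤:ℕ∞) : WithTop ℕ∞) f x) :
    DifferentiableAt ℝ (fderiv ℝ f) x :=
  (hf.fderiv_right (m := 1) (by norm_cast)).differentiableAt one_ne_zero

lemma pd_diffAt' (hf : ContDiffAt ℝ ((⊤:ℕ∞) : WithTop ℕ∞) f x) (j : Fin 3) :
    DifferentiableAt ℝ (fun y => pd f j y) x :=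
  (contDiffAt_fderiv_diff' hf).clm_apply (differentiableAt_const _)

lemma pd_pd' (hf : ContDiffAt ℝ ((⊤:ℕ∞) : WithTop ℕ∞) f x) (i j : Fin 3) :
    pd (fun y => pd f j y) i x = fderiv ℝ (fderiv ℝ f) x (Pi.single i 1) (Pi.single j 1) := by
  unfold pd
  rw [fderiv_clm_apply (contDiffAt_fderiv_diff' hf) (differentiableAt_const _)]
  simp

lemma pd_pd_comm' (hf : ContDiffAt ℝ ((⊤:ℕ∞) : WithTop ℕ∞) f x) (i j : Fin 3) :
    pd (fun y => pd f j y) i x = pd (fun y => pd f i y) j x := by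
  rw [pd_pd' hf, pd_pd' hf, (hf.isSymmSndFDerivAt (by rw [minSmoothness_of_isRCLikeNormedField]; norm_cast)).eq]

end BianchiHelpers

/-- The rewritten third Bianchi–Padova relation `X_{[ji]kl} = R_{ij(kl)}`, and its
consequence: the skew expression vanishes identically iff `R_{ij(kl)}` does. -/
theorem third_bianchi_rewritten (Ω : Set E3) (hΩ : IsOpen Ω) (hne : Ω.Nonempty)
    (L : Conn) (hL : ConnSmooth L Ω) (g : Metric) (hg : MetricOn g Ω) :
    (∀ x ∈ Ω, ∀ i j k l : Fin 3,
      (1 / 2) * (X L g j i k l x - X L g i j k l x)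
        = (1 / 2) * (lcurv L g x i j k l + lcurv L g x i j l k)) ∧
    ((∀ x ∈ Ω, ∀ i j k l : Fin 3, (1 / 2) * (X L g j i k l x - X L g i j k l x) = 0)
      ↔ (∀ x ∈ Ω, ∀ i j k l : Fin 3,
          (1 / 2) * (lcurv L g x i j k l + lcurv L g x i j l k) = 0)) := by
  have key : ∀ x ∈ Ω, ∀ i j k l : Fin 3,
      (1 / 2) * (X L g j i k l x - X L g i j k l x)
        = (1 / 2) * (lcurv L g x i j k l + lcurv L g x i j l k) := by
    intro x hx i j k l
    have hmem := hΩ.mem_nhds hx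
    have hgc : ∀ a b, ContDiffAt ℝ ((⊤:ℕ∞) : WithTop ℕ∞) (fun y => g y a b) x :=
      fun a b => (hg.1 a b).contDiffAt hmem
    have hgd : ∀ a b, DifferentiableAt ℝ (fun y => g y a b) x :=
      fun a b => (hgc a b).differentiableAt (by norm_cast)
    have hLd : ∀ a b c, DifferentiableAt ℝ (fun y => L y a b c) x :=
      fun a b c => ((hL a b c).contDiffAt hmem).differentiableAt (by norm_cast)
    have hpdgd : ∀ a b c, DifferentiableAt ℝ (fun y => pd (fun z => g z a b) c y) x :=
      fun a b c => pd_diffAt' (hgc a b) c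
    have hsymg : ∀ a b, g x a b = g x b a := fun a b => (hg.2.1 x hx).apply b a
    have hpdgsym : ∀ a b c, pd (fun y => g y a b) c x = pd (fun y => g y b a) c x := by
      intro a b c
      apply pd_congr'
      filter_upwards [hmem] with y hy
      exact (hg.2.1 y hy).apply b a
    have pdnm : ∀ a b c d : Fin 3, pd (fun y => nm L g y a b c) d x
        = - pd (fun y => pd (fun z => g z b c) a y) d x
          + ∑ p, (pd (fun y => L y p a c) d x * g x b p + L x p a c * pd (fun y => g y b p) d x
            + (pd (fun y => L y p a b) d x * g x c p + L x p a b * pd (fun y => g y c p) d x)) := by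
      intro a b c d
      have e1 : (fun y => nm L g y a b c)
          = fun y => (-pd (fun z => g z b c) a y)
              + ∑ p, (L y p a c * g y b p + L y p a b * g y c p) := rfl
      rw [e1, pd_add' (f₁ := fun y => -pd (fun z => g z b c) a y)
            (f₂ := fun y => ∑ p, (L y p a c * g y b p + L y p a b * g y c p))
            (hpdgd b c a).neg
            (DifferentiableAt.fun_sum fun p _ =>
              ((hLd p a c).mul (hgd b p)).add ((hLd p a b).mul (hgd c p))),
          pd_neg',
          pd_sum' (F := fun p y => L y p a c * g y b p + L y p a b * g y c p)
            (fun p => ((hLd p a c).mul (hgd b p)).add ((hLd p a b).mul (hgd c p)))]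
      refine congrArg₂ _ rfl (Finset.sum_congr rfl fun p _ => ?_)
      rw [pd_add' ((hLd p a c).fun_mul (hgd b p)) ((hLd p a b).fun_mul (hgd c p)),
        pd_mul' (hLd p a c) (hgd b p), pd_mul' (hLd p a b) (hgd c p)]
    have hD2 : pd (fun y => pd (fun z => g z k l) i y) j x
        = pd (fun y => pd (fun z => g z k l) j y) i x := pd_pd_comm' (hgc k l) j i
    simp only [X]
    simp only [pdnm]
    simp only [nm, lcurv, curv]
    simp only [Fin.sum_univ_three]
    rw [hD2]
    simp only [hpdgsym 0 k, hpdgsym 1 k, hpdgsym 2 k, hpdgsym 0 l, hpdgsym 1 l, hpdgsym 2 l,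
      hsymg 1 0, hsymg 2 0, hsymg 2 1]
    ring
  refine ⟨key, ?_⟩
  constructor
  · intro h x hx i j k l
    rw [← key x hx i j k l]
    exact h x hx i j k l
  · intro h x hx i j k l
    rw [key x hx i j k l]
    exact h x hx i j k l
end
end
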